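/- If s is an adult digit string with every run length at most 3, then every run of Z(s) has exactly length 2 and Z(Z(s)) = Z(s); that is, Z(s) is a fixed point of Z. -/

import Mathlib

/-- Run-length encoding of a digit string. -/
def rle : List ℕ → List (ℕ × ℕ)
  | [] => []
  | a :: t =>
    match rle t with
    | [] => [(a, 1)]
    | (b, n) :: r => if a = b then (b, n + 1) :: r else (a, 1) :: (b, n) :: r

/-- The "look-and-say-the-biggest" map: each maximal run of the digit `a` of length `n`
is replaced by the decimal digits of `max n a` followed by the digit `a`.
(When `n ≤ 9` this is just the two digits `max n a`, `a`.) -/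
def Z (s : List ℕ) : List ℕ :=
  ((rle s).map fun p => (Nat.digits 10 (max p.2 p.1)).reverse ++ [p.1]).flatten

/-- `r` is a run-length representation of the digit string `s`: all run lengths are
positive, consecutive base digits differ, and the expansion of `r` equals `s`. -/
def IsRLE (r : List (ℕ × ℕ)) (s : List ℕ) : Prop :=
  (∀ p ∈ r, 1 ≤ p.2) ∧ (r.map Prod.fst).Chain' (· ≠ ·) ∧
    (r.map fun p => List.replicate p.2 p.1).flatten = s

lemma rle_fst_mem : ∀ (s : List ℕ) (p : ℕ × ℕ), p ∈ rle s → p.1 ∈ s := by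
  intro s
  induction s with
  | nil => intro p hp; simp [rle] at hp
  | cons a t ih =>
    intro p hp
    rw [rle] at hp
    cases h : rle t with
    | nil => rw [h] at hp; simp at hp; simp [hp]
    | cons q r =>
      obtain ⟨b, n⟩ := q
      rw [h] at hp
      by_cases hab : a = b
      · simp only [hab, if_true, List.mem_cons] at hp
        rcases hp with hp | hp
        · have hb : ((b, n) : ℕ × ℕ).1 ∈ t := ih (b, n) (by rw [h]; exact List.mem_cons_self)
          subst hp; exact List.mem_cons_of_mem _ hb
        · exact List.mem_cons_of_mem _ (ih p (by rw [h]; exact List.mem_cons_of_mem _ hp))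
      · simp only [hab, if_false, List.mem_cons] at hp
        rcases hp with hp | hp | hp
        · subst hp; exact List.mem_cons_self
        · subst hp
          exact List.mem_cons_of_mem _ (ih (b, n) (by rw [h]; exact List.mem_cons_self))
        · exact List.mem_cons_of_mem _ (ih p (by rw [h]; exact List.mem_cons_of_mem _ hp))

lemma rle_chain : ∀ (s : List ℕ), ((rle s).map Prod.fst).Chain' (· ≠ ·) := by
  intro s
  induction s with
  | nil => simp [rle, List.Chain']
  | cons a t ih =>
    rw [rle]
    cases h : rle t with
    | nil => simp [List.Chain']
    | cons q r =>
      obtain ⟨b, n⟩ := q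
      rw [h] at ih
      by_cases hab : a = b
      · simpa [hab] using ih
      · simp only [hab, if_false, List.map_cons]
        exact List.IsChain.cons_cons hab (by simpa [List.Chain'] using ih)

lemma rle_head_fst : ∀ (a : ℕ) (t : List ℕ), ∃ n r, rle (a :: t) = (a, n) :: r := by
  intro a t
  rw [rle]
  cases h : rle t with
  | nil => exact ⟨1, [], rfl⟩
  | cons q r =>
    obtain ⟨b, n⟩ := q
    by_cases hab : a = b
    · subst hab; exact ⟨n + 1, r, by simp⟩
    · exact ⟨1, (b, n) :: r, by simp [hab]⟩

lemma rle_cons_cons (a : ℕ) (t : List ℕ)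
    (h : ∀ b n r, rle t = (b, n) :: r → a ≠ b) :
    rle (a :: a :: t) = (a, 2) :: rle t := by
  have h1 : rle (a :: t) = (a, 1) :: rle t := by
    rw [rle]
    cases ht : rle t with
    | nil => rfl
    | cons q r =>
      obtain ⟨b, n⟩ := q
      simp [h b n r ht]
  rw [rle, h1]
  simp

lemma rle_pairs : ∀ (r : List (ℕ × ℕ)),
    (r.map Prod.fst).Chain' (· ≠ ·) →
    rle ((r.map fun p => [p.1, p.1]).flatten) = r.map fun p => (p.1, 2) := by
  intro r
  induction r with
  | nil => intro _; simp [rle]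
  | cons q r ih =>
    obtain ⟨a, m⟩ := q
    intro hch
    simp only [List.map_cons] at hch
    have hch' := hch.tail
    have ihr := ih hch'
    simp only [List.map_cons, List.flatten_cons, List.cons_append, List.nil_append]
    have key : rle (a :: a :: (List.map (fun p => [p.1, p.1]) r).flatten)
        = (a, 2) :: rle ((List.map (fun p => [p.1, p.1]) r).flatten) := by
      apply rle_cons_cons
      intro b n rr hb
      cases r with
      | nil => simp [rle] at hb
      | cons q2 r2 =>
        obtain ⟨c, k⟩ := q2
        simp only [List.map_cons, List.flatten_cons, List.cons_append, List.nil_append] at hb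
        obtain ⟨n0, r0, h0⟩ := rle_head_fst c (c :: (List.map (fun p => [p.1, p.1]) r2).flatten)
        rw [h0, List.cons.injEq, Prod.mk.injEq] at hb
        rw [hb.1.1.symm]
        exact List.isChain_cons_cons.mp hch |>.1
    rw [key, ihr]

/-- For an adult string with run lengths ≤ 3, every run of `Z(s)` has length exactly 2
and `Z(s)` is a fixed point of `Z`. -/
theorem Z_adult_short_runs_fixed (s : List ℕ) (hdig : ∀ d ∈ s, d ≤ 9)
    (hadult : ∀ d ∈ s, 4 ≤ d) (hrun : ∀ p ∈ rle s, p.2 ≤ 3) :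
    (∀ p ∈ rle (Z s), p.2 = 2) ∧ Z (Z s) = Z s := by
  have hblock : ∀ p ∈ rle s,
      (Nat.digits 10 (max p.2 p.1)).reverse ++ [p.1] = [p.1, p.1] := by
    intro p hp
    have h4 : 4 ≤ p.1 := hadult _ (rle_fst_mem s p hp)
    have h9 : p.1 ≤ 9 := hdig _ (rle_fst_mem s p hp)
    have h3 : p.2 ≤ 3 := hrun p hp
    have hmax : max p.2 p.1 = p.1 := max_eq_right (by omega)
    rw [hmax]
    have : Nat.digits 10 p.1 = [p.1] := by
      interval_cases h : p.1 <;> simp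
    rw [this]; rfl
  have hZ : Z s = ((rle s).map fun p => [p.1, p.1]).flatten := by
    unfold Z
    congr 1
    exact List.map_congr_left hblock
  have hrleZ : rle (Z s) = (rle s).map fun p => (p.1, 2) := by
    rw [hZ, rle_pairs _ (rle_chain s)]
  constructor
  · intro p hp
    rw [hrleZ, List.mem_map] at hp
    obtain ⟨q, hq, rfl⟩ := hp
    rfl
  · have hblock2 : ∀ p ∈ rle (Z s),
        (Nat.digits 10 (max p.2 p.1)).reverse ++ [p.1] = [p.1, p.1] := by
      intro p hp
      rw [hrleZ, List.mem_map] at hp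
      obtain ⟨q, hq, rfl⟩ := hp
      obtain ⟨a, b⟩ := q
      have hmem := rle_fst_mem s (a, b) hq
      have h4 : 4 ≤ a := hadult _ hmem
      have h9 : a ≤ 9 := hdig _ hmem
      show (Nat.digits 10 (max 2 a)).reverse ++ [a] = [a, a]
      have hmax : max 2 a = a := max_eq_right (by omega)
      rw [hmax]
      have : Nat.digits 10 a = [a] := by
        interval_cases a <;> simp
      rw [this]; rfl
    conv_lhs => rw [Z, List.map_congr_left hblock2]
    rw [hrleZ, hZ]
    rw [List.map_map]
    rfl
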